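/- Assume the pm×pm block Toeplitz matrix T is invertible and J ∈ ℝ^{m×m} is invertible, and let Φ̃_{p,1}, …, Φ̃_{p,p} ∈ ℝ^{m×m} satisfy the backward Yule–Walker equations. If for each u, v ∈ {1,…,m} the matrices D_1^{(u,v)}, …, D_p^{(u,v)} ∈ ℝ^{m×m} satisfy the orthogonality equations, then necessarily D_r^{(u,v)} = E_{u,v} Φ̃_{p,p+1−r} for all r = 1,…,p and u,v = 1,…,m; that is, the orthogonality equations uniquely determine the partial derivative matrices ∂Φ_{p+1,r}/∂(Φ_{p+1,p+1})_{(u,v)}. -/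

import Mathlib

open scoped Matrix

/-- `Φ̃_{p,1}, …, Φ̃_{p,p}` satisfy the backward Yule–Walker equations:
`∑_{r=1}^p ∑_ℓ (Φ̃_{p,p+1−r})_{(i,ℓ)} (Γ_{s−r})_{(ℓ,j)} = −(Γ_{s−p−1})_{(i,j)}`
for all `s = 1,…,p` and `i,j = 1,…,m`. -/
def BackwardYW (m p : ℕ) (Γ : ℤ → Matrix (Fin m) (Fin m) ℝ)
    (Φt : ℕ → Matrix (Fin m) (Fin m) ℝ) : Prop :=
  ∀ s ∈ Finset.Icc 1 p, ∀ i j : Fin m,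
    ∑ r ∈ Finset.Icc 1 p, ∑ ℓ : Fin m,
      Φt (p + 1 - r) i ℓ * Γ ((s : ℤ) - (r : ℤ)) ℓ j
    = -Γ ((s : ℤ) - (p : ℤ) - 1) i j

/-- The family `(D_r^{(u,v)})` satisfies the orthogonality equations:
`∑_{r=1}^p ∑_k ∑_ℓ J_{(k,i)} (Γ_{s−r})_{(ℓ,j)} (D_r^{(u,v)})_{(k,ℓ)}
  = −J_{(u,i)} (Γ_{s−p−1})_{(v,j)}`
for all `s = 1,…,p` and `i,j,u,v = 1,…,m`. -/
def OrthogonalityEqs (m p : ℕ) (Γ : ℤ → Matrix (Fin m) (Fin m) ℝ)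
    (J : Matrix (Fin m) (Fin m) ℝ)
    (D : ℕ → Fin m → Fin m → Matrix (Fin m) (Fin m) ℝ) : Prop :=
  ∀ s ∈ Finset.Icc 1 p, ∀ i j u v : Fin m,
    ∑ r ∈ Finset.Icc 1 p, ∑ k : Fin m, ∑ ℓ : Fin m,
      J k i * Γ ((s : ℤ) - (r : ℤ)) ℓ j * D r u v k ℓ
    = -(J u i * Γ ((s : ℤ) - (p : ℤ) - 1) v j)

private lemma sum_Icc_one_fin (p : ℕ) (f : ℕ → ℝ) :
    ∑ r ∈ Finset.Icc 1 p, f r = ∑ a : Fin p, f (a.1 + 1) := by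
  rw [Fin.sum_univ_eq_sum_range (fun a => f (a + 1)), ← Finset.Ico_add_one_right_eq_Icc, Finset.sum_Ico_eq_sum_range]
  simp [add_comm]

private lemma stdBasis_mul_apply {m : ℕ} (u v : Fin m)
    (M : Matrix (Fin m) (Fin m) ℝ) (k ℓ : Fin m) :
    (Matrix.single u v (1 : ℝ) * M) k ℓ
      = if k = u then M v ℓ else 0 := by
  simp [Matrix.mul_apply, Matrix.single, ite_and, eq_comm]

/-- If the block Toeplitz matrix `T` (with `(a,b)`-th block `Γ_{b−a}`) and `J` are
invertible and `Φ̃_{p,1}, …, Φ̃_{p,p}` satisfy the backward Yule–Walker equations,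
then any family `(D_r^{(u,v)})` satisfying the orthogonality equations must equal
`D_r^{(u,v)} = E_{u,v} Φ̃_{p,p+1−r}`. -/
theorem stmt15 {m p : ℕ} (hm : 1 ≤ m) (hp : 1 ≤ p)
    (Γ : ℤ → Matrix (Fin m) (Fin m) ℝ)
    (hT : IsUnit (Matrix.of fun a b : Fin p × Fin m =>
      Γ ((b.1 : ℤ) - (a.1 : ℤ)) a.2 b.2))
    (J : Matrix (Fin m) (Fin m) ℝ) (hJ : IsUnit J)
    (Φt : ℕ → Matrix (Fin m) (Fin m) ℝ)
    (hYW : BackwardYW m p Γ Φt)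
    (D : ℕ → Fin m → Fin m → Matrix (Fin m) (Fin m) ℝ)
    (hD : OrthogonalityEqs m p Γ J D) :
    ∀ r ∈ Finset.Icc 1 p, ∀ u v : Fin m,
      D r u v = Matrix.single u v (1 : ℝ) * Φt (p + 1 - r) := by
  intro r0 hr0 u v
  obtain ⟨hr1, hrp⟩ := Finset.mem_Icc.mp hr0
  ext k ℓ0
  set T : Matrix (Fin p × Fin m) (Fin p × Fin m) ℝ :=
    Matrix.of fun a b : Fin p × Fin m => Γ ((b.1 : ℤ) - (a.1 : ℤ)) a.2 b.2 with hTdef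
  set x : Fin p × Fin m → ℝ := fun q =>
    D (q.1.1 + 1) u v k q.2
      - (Matrix.single u v (1 : ℝ) * Φt (p - q.1.1)) k q.2 with hxdef
  have key : x ᵥ* T = 0 ᵥ* T := by
    rw [Matrix.zero_vecMul]
    funext q
    obtain ⟨b, j⟩ := q
    have hs : b.1 + 1 ∈ Finset.Icc 1 p := Finset.mem_Icc.mpr ⟨Nat.le_add_left 1 b.1, b.2⟩
    set c : Fin m → ℝ := fun k' => ∑ a : Fin p, ∑ ℓ : Fin m,
        (D (a.1 + 1) u v k' ℓ
          - (Matrix.single u v (1 : ℝ) * Φt (p - a.1)) k' ℓ)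
          * Γ ((b.1 : ℤ) - (a.1 : ℤ)) ℓ j with hcdef
    have hc0 : ∀ i, ∑ k' : Fin m, J k' i * c k' = 0 := by
      intro i
      have ecast : ∀ a : Fin p,
          ((b.1 + 1 : ℕ) : ℤ) - ((a.1 + 1 : ℕ) : ℤ) = (b.1 : ℤ) - (a.1 : ℤ) := by
        intro a; push_cast; ring
      have epn : ∀ a : Fin p, p + 1 - (a.1 + 1) = p - a.1 := fun a => by omega
      have h1 := hD (b.1 + 1) hs i j u v
      rw [sum_Icc_one_fin] at h1
      simp only [ecast] at h1
      have h2 := hYW (b.1 + 1) hs v j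
      rw [sum_Icc_one_fin] at h2
      simp only [ecast, epn] at h2
      have expand : ∑ k' : Fin m, J k' i * c k'
          = (∑ a : Fin p, ∑ k' : Fin m, ∑ ℓ : Fin m,
              J k' i * Γ ((b.1 : ℤ) - (a.1 : ℤ)) ℓ j * D (a.1 + 1) u v k' ℓ)
            - J u i * ∑ a : Fin p, ∑ ℓ : Fin m,
              Φt (p - a.1) v ℓ * Γ ((b.1 : ℤ) - (a.1 : ℤ)) ℓ j := by
        simp only [hcdef, Finset.mul_sum, Finset.sum_sub_distrib, sub_mul, mul_sub]
        rw [Finset.sum_comm (γ := Fin m) (α := Fin p)]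
        congr 1
        · refine Finset.sum_congr rfl fun a _ => Finset.sum_congr rfl fun k' _ =>
            Finset.sum_congr rfl fun ℓ _ => by ring
        · rw [Finset.sum_comm]
          refine Finset.sum_congr rfl fun a _ => ?_
          rw [Finset.sum_comm]
          refine Finset.sum_congr rfl fun ℓ _ => ?_
          simp only [stdBasis_mul_apply, mul_ite, ite_mul, mul_zero, zero_mul,
            Finset.sum_ite_eq', Finset.mem_univ, if_true]
      rw [expand, h1, h2]
      ring
    have hcz : c = 0 := by
      have hJt : IsUnit Jᵀ := (Matrix.isUnit_transpose J).mpr hJ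
      have : Jᵀ *ᵥ c = Jᵀ *ᵥ 0 := by
        rw [Matrix.mulVec_zero]
        funext i
        rw [Matrix.mulVec]
        simpa [dotProduct, Matrix.transpose_apply] using hc0 i
      exact Matrix.mulVec_injective_iff_isUnit.mpr hJt this
    have : (x ᵥ* T) (b, j) = c k := by
      rw [Matrix.vecMul, dotProduct]
      rw [Fintype.sum_prod_type]
      rfl
    rw [this, hcz]
    rfl
  have hx0 : x = 0 := Matrix.vecMul_injective_iff_isUnit.mpr hT key
  have hr' : r0 - 1 < p := by omega
  have := congrFun hx0 (⟨r0 - 1, hr'⟩, ℓ0)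
  simp only [hxdef, Pi.zero_apply, sub_eq_zero] at this
  have e1 : r0 - 1 + 1 = r0 := by omega
  have e2 : p - (r0 - 1) = p + 1 - r0 := by omega
  rw [e1, e2] at this
  exact this
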